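/- Suppose p* is a probability distribution on A maximizing p ↦ det V(p) over all probability distributions on A, and suppose V(p*) is positive definite. Then for all x, y in the convex hull of {φ_a : a ∈ A}, (x − y)^⊤ V(p*)^{-1} (x − y) ≤ 4d; equivalently ‖x − y‖_{V(p*)^{-1}} ≤ 2√d. -/

import Mathlib

open Matrix Finset

/-- Mean feature vector `μ(p) = ∑_a p_a φ_a`. -/
noncomputable def featMean {A : Type*} [Fintype A] {d : ℕ} (φ : A → Fin d → ℝ)
    (p : A → ℝ) : Fin d → ℝ :=
  ∑ a, p a • φ a

/-- Centered feature covariance matrix `V(p) = ∑_a p_a φ̄_a φ̄_a^⊤`, where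
`φ̄_a = φ_a − μ(p)`. -/
noncomputable def covMat {A : Type*} [Fintype A] {d : ℕ} (φ : A → Fin d → ℝ)
    (p : A → ℝ) : Matrix (Fin d) (Fin d) ℝ :=
  ∑ a, p a • Matrix.vecMulVec (φ a - featMean φ p) (φ a - featMean φ p)

lemma featMean_apply {A : Type*} [Fintype A] {d : ℕ} (φ : A → Fin d → ℝ) (p : A → ℝ)
    (i : Fin d) : featMean φ p i = ∑ a, p a * φ a i := by
  simp [featMean, Finset.sum_apply]

lemma covMat_apply {A : Type*} [Fintype A] {d : ℕ} (φ : A → Fin d → ℝ) (p : A → ℝ)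
    (hp1 : ∑ a, p a = 1) (i j : Fin d) :
    covMat φ p i j = (∑ a, p a * (φ a i * φ a j)) - featMean φ p i * featMean φ p j := by
  have hm := featMean_apply φ p
  simp only [covMat, Matrix.sum_apply, Matrix.smul_apply, vecMulVec_apply, Pi.sub_apply,
    smul_eq_mul]
  calc ∑ a, p a * ((φ a i - featMean φ p i) * (φ a j - featMean φ p j))
      = ∑ a, (p a * (φ a i * φ a j) - (p a * φ a i) * featMean φ p j
          - featMean φ p i * (p a * φ a j) + (featMean φ p i * featMean φ p j) * p a) := by
        apply Finset.sum_congr rfl; intro a _; ring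
    _ = _ := by
        rw [Finset.sum_add_distrib, Finset.sum_sub_distrib, Finset.sum_sub_distrib,
          ← Finset.sum_mul, ← Finset.mul_sum, ← Finset.mul_sum, hp1, ← hm i, ← hm j]
        ring

lemma covMat_perturb {A : Type*} [Fintype A] [DecidableEq A] {d : ℕ}
    (φ : A → Fin d → ℝ) (p : A → ℝ) (hp1 : ∑ a, p a = 1) (a : A) (t : ℝ) :
    covMat φ (fun b => (1 - t) * p b + t * (if b = a then 1 else 0))
      = (1 - t) • (covMat φ p
          + t • Matrix.vecMulVec (φ a - featMean φ p) (φ a - featMean φ p)) := by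
  set q : A → ℝ := fun b => (1 - t) * p b + t * (if b = a then 1 else 0) with hqdef
  have hq1 : ∑ b, q b = 1 := by
    simp [hqdef, Finset.sum_add_distrib, ← Finset.mul_sum, hp1]
  have hsum : ∀ f : A → ℝ, ∑ b, q b * f b = (1 - t) * (∑ b, p b * f b) + t * f a := by
    intro f
    simp [hqdef, add_mul, Finset.sum_add_distrib, ← Finset.mul_sum, mul_assoc, ite_mul,
      Finset.sum_ite_eq']
  have hmq : ∀ i, featMean φ q i = (1 - t) * featMean φ p i + t * φ a i := by
    intro i
    rw [featMean_apply, featMean_apply]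
    exact hsum (fun b => φ b i)
  ext i j
  rw [covMat_apply φ q hq1, hsum (fun b => φ b i * φ b j), hmq i, hmq j]
  simp only [Matrix.smul_apply, Matrix.add_apply, vecMulVec_apply, Pi.sub_apply, smul_eq_mul,
    covMat_apply φ p hp1]
  ring

lemma det_perturb {d : ℕ} (V : Matrix (Fin d) (Fin d) ℝ) (hV : IsUnit V.det)
    (u : Fin d → ℝ) (t : ℝ) :
    ((1 - t) • (V + t • Matrix.vecMulVec u u)).det
      = (1 - t) ^ d * (V.det * (1 + t * (u ⬝ᵥ V⁻¹ *ᵥ u))) := by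
  have h1 : t • Matrix.vecMulVec u u = Matrix.vecMulVec u (t • u) := by
    ext i j
    simp [vecMulVec_apply, mul_comm, mul_left_comm]
  have h2 : V + Matrix.vecMulVec u (t • u)
      = V * (1 + V⁻¹ * (Matrix.replicateCol (Fin 1) u * Matrix.replicateRow (Fin 1) (t • u))) := by
    rw [Matrix.mul_add, Matrix.mul_one, Matrix.mul_nonsing_inv_cancel_left _ _ hV,
      Matrix.vecMulVec_eq (Fin 1)]
    rfl
  erw [Matrix.det_smul, Fintype.card_fin, h1, h2, Matrix.det_mul, ← Matrix.mul_assoc,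
    ← Matrix.replicateCol_mulVec, Matrix.det_one_add_replicateCol_mul_replicateRow, smul_dotProduct, smul_eq_mul]

/-- Lemma 8: bounded quadratic form induced by the optimal design
distribution. If `p*` maximizes `p ↦ det V(p)` over probability distributions on `A` and
`V(p*)` is positive definite, then for all `x, y` in the convex hull of `{φ_a : a ∈ A}`,
`(x − y)^⊤ V(p*)⁻¹ (x − y) ≤ 4d`, equivalently `‖x − y‖_{V(p*)⁻¹} ≤ 2√d`. -/
theorem optimal_design_quadratic_form_bound
    {A : Type*} [Fintype A] [Nonempty A] {d : ℕ} (hd : 1 ≤ d)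
    (φ : A → Fin d → ℝ) (pstar : A → ℝ)
    (hps : ∀ a, 0 ≤ pstar a) (hps1 : ∑ a, pstar a = 1)
    (hmax : ∀ p : A → ℝ, (∀ a, 0 ≤ p a) → ∑ a, p a = 1 →
      (covMat φ p).det ≤ (covMat φ pstar).det)
    (hV : (covMat φ pstar).PosDef) :
    ∀ x ∈ convexHull ℝ (Set.range φ), ∀ y ∈ convexHull ℝ (Set.range φ),
      ((x - y) ⬝ᵥ ((covMat φ pstar)⁻¹ *ᵥ (x - y)) ≤ 4 * (d : ℝ)) ∧
      Real.sqrt ((x - y) ⬝ᵥ ((covMat φ pstar)⁻¹ *ᵥ (x - y))) ≤ 2 * Real.sqrt d := by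
  classical
  set V := covMat φ pstar with hVdef
  set m := featMean φ pstar with hmdef
  have hdetpos : 0 < V.det := hV.det_pos
  have hWpd : (V⁻¹).PosDef := hV.inv
  have hquad_nonneg : ∀ v : Fin d → ℝ, 0 ≤ v ⬝ᵥ V⁻¹ *ᵥ v := by
    intro v
    have := hWpd.posSemidef.dotProduct_mulVec_nonneg v
    simpa using this
  have hd1 : (1:ℝ) ≤ (d:ℝ) := by exact_mod_cast hd
  -- symmetry of the bilinear form
  have hWs : (V⁻¹)ᵀ = V⁻¹ := by
    have h := hWpd.isHermitian
    simpa [Matrix.IsHermitian, Matrix.conjTranspose_eq_transpose_of_trivial] using h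
  have hsymm : ∀ u v : Fin d → ℝ, u ⬝ᵥ V⁻¹ *ᵥ v = v ⬝ᵥ V⁻¹ *ᵥ u := by
    intro u v
    rw [Matrix.dotProduct_mulVec, ← Matrix.mulVec_transpose, hWs, dotProduct_comm]
  have hexpand : ∀ (a b : ℝ) (u v : Fin d → ℝ),
      (a • u + b • v) ⬝ᵥ V⁻¹ *ᵥ (a • u + b • v)
        = a^2 * (u ⬝ᵥ V⁻¹ *ᵥ u) + 2*a*b*(u ⬝ᵥ V⁻¹ *ᵥ v) + b^2 * (v ⬝ᵥ V⁻¹ *ᵥ v) := by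
    intro a b u v
    simp only [Matrix.mulVec_add, Matrix.mulVec_smul, add_dotProduct, smul_dotProduct,
      dotProduct_add, dotProduct_smul, smul_eq_mul]
    rw [hsymm v u]; ring
  -- Key pointwise bound
  have key : ∀ a : A, (φ a - m) ⬝ᵥ V⁻¹ *ᵥ (φ a - m) ≤ (d : ℝ) := by
    intro a
    set u := φ a - m with hudef
    set g := u ⬝ᵥ V⁻¹ *ᵥ u with hgdef
    have hg0 : 0 ≤ g := hquad_nonneg u
    have hineq : ∀ t : ℝ, 0 < t → t ≤ 1/2 → (1 - t)^d * (1 + t*g) ≤ 1 := by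
      intro t ht ht2
      have hnn : ∀ b, 0 ≤ (1 - t) * pstar b + t * (if b = a then 1 else 0) := by
        intro b
        have h1 : (0:ℝ) ≤ (1-t) * pstar b := mul_nonneg (by linarith) (hps b)
        have h2 : (0:ℝ) ≤ t * (if b = a then 1 else 0) :=
          mul_nonneg ht.le (by split <;> norm_num)
        linarith
      have hsum : ∑ b, ((1 - t) * pstar b + t * (if b = a then 1 else 0)) = 1 := by
        rw [Finset.sum_add_distrib, ← Finset.mul_sum, hps1, ← Finset.mul_sum]
        simp
      have hq := hmax _ hnn hsum
      rw [covMat_perturb φ pstar hps1 a t, det_perturb _ hdetpos.ne'.isUnit u t] at hq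
      nlinarith [hq, hdetpos]
    by_contra hgd
    push_neg at hgd
    have hgpos : (0:ℝ) < g := lt_of_le_of_lt (by positivity) hgd
    set t0 := (g - d)/(2*d*g) with ht0def
    have hdgpos : (0:ℝ) < 2*d*g := by positivity
    have ht0pos : 0 < t0 := div_pos (by linarith) hdgpos
    have ht0half : t0 ≤ 1/2 := by
      rw [ht0def, div_le_iff₀ hdgpos]
      nlinarith
    have h := hineq t0 ht0pos ht0half
    have hbern : 1 + (d:ℝ) * (-t0) ≤ (1 + (-t0))^d :=
      one_add_mul_le_pow (by linarith : (-2:ℝ) ≤ -t0) d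
    have hbern' : 1 - (d:ℝ)*t0 ≤ (1 - t0)^d := by
      have he : (1:ℝ) + -t0 = 1 - t0 := by ring
      rw [he] at hbern; linarith
    have h1tg : (0:ℝ) ≤ 1 + t0*g := by nlinarith
    have h2 : (1 - (d:ℝ)*t0)*(1+t0*g) ≤ 1 :=
      le_trans (mul_le_mul_of_nonneg_right hbern' h1tg) h
    have h3 : g - d ≤ (d:ℝ) * t0 * g := by nlinarith [h2, ht0pos]
    have h4 : (d:ℝ) * t0 * g = (g - d)/2 := by
      rw [ht0def]
      field_simp
    rw [h4] at h3
    linarith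
  -- The sublevel set of the quadratic form is convex and contains the hull.
  set C : Set (Fin d → ℝ) := {z | (z - m) ⬝ᵥ V⁻¹ *ᵥ (z - m) ≤ (d:ℝ)} with hCdef
  have hCconv : Convex ℝ C := by
    intro z1 hz1 z2 hz2 a b ha hb hab
    have hz1' : (z1 - m) ⬝ᵥ V⁻¹ *ᵥ (z1 - m) ≤ (d:ℝ) := hz1
    have hz2' : (z2 - m) ⬝ᵥ V⁻¹ *ᵥ (z2 - m) ≤ (d:ℝ) := hz2
    show (a • z1 + b • z2 - m) ⬝ᵥ V⁻¹ *ᵥ (a • z1 + b • z2 - m) ≤ (d:ℝ)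
    have hcomb : a • z1 + b • z2 - m = a • (z1 - m) + b • (z2 - m) := by
      calc a • z1 + b • z2 - m = a • z1 + b • z2 - (a + b) • m := by rw [hab, one_smul]
        _ = a • (z1 - m) + b • (z2 - m) := by rw [add_smul, smul_sub, smul_sub]; abel
    rw [hcomb, hexpand]
    have hcs : 2 * ((z1 - m) ⬝ᵥ V⁻¹ *ᵥ (z2 - m))
        ≤ ((z1 - m) ⬝ᵥ V⁻¹ *ᵥ (z1 - m)) + ((z2 - m) ⬝ᵥ V⁻¹ *ᵥ (z2 - m)) := by
      have h0 := hquad_nonneg ((1:ℝ) • (z1 - m) + (-1:ℝ) • (z2 - m))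
      rw [hexpand] at h0
      nlinarith [h0]
    set Q1 := (z1 - m) ⬝ᵥ V⁻¹ *ᵥ (z1 - m) with hQ1
    set Q2 := (z2 - m) ⬝ᵥ V⁻¹ *ᵥ (z2 - m) with hQ2
    set B := (z1 - m) ⬝ᵥ V⁻¹ *ᵥ (z2 - m) with hB
    calc a^2 * Q1 + 2*a*b*B + b^2 * Q2
        ≤ a^2 * Q1 + a*b*(Q1 + Q2) + b^2 * Q2 := by
          nlinarith [mul_le_mul_of_nonneg_left hcs (mul_nonneg ha hb)]
      _ = a*(a+b)*Q1 + b*(a+b)*Q2 := by ring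
      _ = a*Q1 + b*Q2 := by rw [hab]; ring
      _ ≤ a*(d:ℝ) + b*(d:ℝ) :=
          add_le_add (mul_le_mul_of_nonneg_left hz1' ha) (mul_le_mul_of_nonneg_left hz2' hb)
      _ = (d:ℝ) := by rw [← add_mul, hab, one_mul]
  have hsub : Set.range φ ⊆ C := by
    rintro _ ⟨a, rfl⟩
    exact key a
  have hhull : convexHull ℝ (Set.range φ) ⊆ C := convexHull_min hsub hCconv
  intro x hx y hy
  have hxC : (x - m) ⬝ᵥ V⁻¹ *ᵥ (x - m) ≤ (d:ℝ) := hhull hx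
  have hyC : (y - m) ⬝ᵥ V⁻¹ *ᵥ (y - m) ≤ (d:ℝ) := hhull hy
  have hxy : x - y = (1:ℝ) • (x - m) + (-1:ℝ) • (y - m) := by
    simp only [one_smul, neg_smul]
    abel
  have hmain : (x - y) ⬝ᵥ V⁻¹ *ᵥ (x - y) ≤ 4 * (d:ℝ) := by
    rw [hxy, hexpand]
    have hcs : 2 * ((x - m) ⬝ᵥ V⁻¹ *ᵥ (y - m))
        ≥ -(((x - m) ⬝ᵥ V⁻¹ *ᵥ (x - m)) + ((y - m) ⬝ᵥ V⁻¹ *ᵥ (y - m))) := by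
      have h0 := hquad_nonneg ((1:ℝ) • (x - m) + (1:ℝ) • (y - m))
      rw [hexpand] at h0
      nlinarith [h0]
    nlinarith [hxC, hyC, hcs]
  refine ⟨hmain, ?_⟩
  have h4d : Real.sqrt (4 * (d:ℝ)) = 2 * Real.sqrt d := by
    rw [show (4:ℝ) * (d:ℝ) = (2 * Real.sqrt d)^2 by
      rw [mul_pow, Real.sq_sqrt (Nat.cast_nonneg d)]; norm_num]
    exact Real.sqrt_sq (by positivity)
  calc Real.sqrt ((x - y) ⬝ᵥ V⁻¹ *ᵥ (x - y)) ≤ Real.sqrt (4 * (d:ℝ)) :=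
        Real.sqrt_le_sqrt hmain
    _ = 2 * Real.sqrt d := h4d
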